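/- Let f : {-1,1}^n → ℝ have degree at most d. Then ‖Lf‖_1 ≤ d² ‖f‖_1, where Lf = Σ_{S} |S| f̂(S) χ_S is the discrete Laplacian and ‖·‖_1 is the L1 norm under the uniform measure on {-1,1}^n. -/

import Mathlib

open Finset

/-- The Fourier character χ_S evaluated at a point of the Boolean cube
(coordinates encoded by `Bool`, with `true ↦ 1` and `false ↦ -1`). -/
noncomputable def char {n : ℕ} (S : Finset (Fin n)) (x : Fin n → Bool) : ℝ :=
  ∏ i ∈ S, (if x i then (1 : ℝ) else -1)

/-- The multilinear polynomial with Fourier coefficients `c`, evaluated on the cube. -/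
noncomputable def eval' {n : ℕ} (c : Finset (Fin n) → ℝ) (x : Fin n → Bool) : ℝ :=
  ∑ S : Finset (Fin n), c S * char S x

/-- Flip the i-th coordinate. -/
def flipAt {n : ℕ} (x : Fin n → Bool) (i : Fin n) : Fin n → Bool :=
  Function.update x i (!(x i))

/-- Expectation over the uniform measure on the cube. -/
noncomputable def Ex {n : ℕ} (g : (Fin n → Bool) → ℝ) : ℝ :=
  (∑ x : Fin n → Bool, g x) / 2 ^ n

/-- combined factor function -/
noncomputable def gf {n : ℕ} (S T : Finset (Fin n)) (i : Fin n) (b : Bool) : ℝ :=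
  (if i ∈ S then (if b then (1:ℝ) else -1) else 1)
    * (if i ∈ T then (if b then (1:ℝ) else -1) else 1)

lemma char_mul_char {n : ℕ} (S T : Finset (Fin n)) (x : Fin n → Bool) :
    char S x * char T x = ∏ i : Fin n, gf S T i (x i) := by
  unfold gf
  rw [Finset.prod_mul_distrib]
  unfold char
  congr 1 <;> rw [← Finset.prod_filter] <;> congr 1 <;> simp [Finset.filter_mem_eq_inter]

lemma sum_swap_prod {n : ℕ} (f : Fin n → Bool → ℝ) :
    ∑ x : Fin n → Bool, ∏ i : Fin n, f i (x i) = ∏ i : Fin n, (f i true + f i false) := by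
  have h := Finset.prod_univ_sum (fun _ : Fin n => (Finset.univ : Finset Bool)) f
  rw [Fintype.piFinset_univ] at h
  rw [← h]
  congr 1; ext i; simp [Fintype.sum_bool]

lemma orth {n : ℕ} (S T : Finset (Fin n)) :
    ∑ x : Fin n → Bool, char S x * char T x = if S = T then (2:ℝ)^n else 0 := by
  rw [Finset.sum_congr rfl (fun x _ => char_mul_char S T x), sum_swap_prod]
  by_cases hst : S = T
  · subst hst
    rw [if_pos rfl]
    rw [Finset.prod_congr rfl (fun i _ => show gf S S i true + gf S S i false = 2 from ?_),
      Finset.prod_const]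
    · norm_num
    · unfold gf; by_cases hiS : i ∈ S <;> simp [hiS] <;> ring
  · rw [if_neg hst]
    have : ∃ i, (i ∈ S ∧ i ∉ T) ∨ (i ∈ T ∧ i ∉ S) := by
      by_contra hc
      push_neg at hc
      exact hst (Finset.ext fun i => ⟨(hc i).1, (hc i).2⟩)
    obtain ⟨i, hi⟩ := this
    apply Finset.prod_eq_zero (Finset.mem_univ i)
    rcases hi with ⟨h1, h2⟩ | ⟨h1, h2⟩ <;> unfold gf <;> simp [h1, h2]

lemma sum_char {n : ℕ} (S : Finset (Fin n)) :
    ∑ x : Fin n → Bool, char S x = if S = ∅ then (2:ℝ)^n else 0 := by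
  have h := orth S (∅ : Finset (Fin n))
  simp only [char, Finset.prod_empty, mul_one] at h
  exact h

lemma fourier_inv {n : ℕ} (c : Finset (Fin n) → ℝ) (S : Finset (Fin n)) :
    ∑ x : Fin n → Bool, eval' c x * char S x = c S * 2^n := by
  unfold eval'
  simp_rw [Finset.sum_mul, mul_assoc]
  rw [Finset.sum_comm]
  rw [Finset.sum_congr rfl (fun T _ => (Finset.mul_sum _ _ _).symm)]
  rw [Finset.sum_congr rfl (fun T _ => by rw [orth T S])]
  simp [Finset.sum_ite_eq, eq_comm]

noncomputable def Kker {n : ℕ} (ρ : ℝ) (x z : Fin n → Bool) : ℝ :=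
  ∏ i : Fin n, (1 + ρ * (if x i then (1:ℝ) else -1) * (if z i then (1:ℝ) else -1))

lemma Kker_eq {n : ℕ} (ρ : ℝ) (x z : Fin n → Bool) :
    Kker ρ x z = ∑ S : Finset (Fin n), ρ ^ S.card * (char S x * char S z) := by
  unfold Kker
  rw [Finset.prod_congr rfl (fun i _ => add_comm (1:ℝ) _), Finset.prod_add]
  rw [← Finset.powerset_univ]
  apply Finset.sum_congr rfl
  intro S _
  rw [Finset.prod_const, one_pow, mul_one]
  unfold char
  rw [show ∀ T : Finset (Fin n), (∏ i ∈ T, ρ * (if x i then (1:ℝ) else -1) * (if z i then (1:ℝ) else -1)) = (∏ i ∈ T, ρ) * ((∏ i ∈ T, (if x i then (1:ℝ) else -1)) * (∏ i ∈ T, (if z i then (1:ℝ) else -1))) from fun T => by rw [← Finset.prod_mul_distrib, ← Finset.prod_mul_distrib]; exact Finset.prod_congr rfl fun i _ => by ring, Finset.prod_const]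

lemma Kker_nonneg {n : ℕ} {ρ : ℝ} (hρ : |ρ| ≤ 1) (x z : Fin n → Bool) :
    0 ≤ Kker ρ x z := by
  apply Finset.prod_nonneg
  intro i _
  have h1 : |ρ * (if x i then (1:ℝ) else -1) * (if z i then (1:ℝ) else -1)| ≤ 1 := by
    rw [abs_mul, abs_mul]
    rcases Bool.eq_false_or_eq_true (x i) with h | h <;>
      rcases Bool.eq_false_or_eq_true (z i) with h' | h' <;>
      simp [h, h', abs_of_nonneg, hρ]
  nlinarith [neg_abs_le (ρ * (if x i then (1:ℝ) else -1) * (if z i then (1:ℝ) else -1))]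

lemma sum_Kker {n : ℕ} (ρ : ℝ) (z : Fin n → Bool) :
    ∑ x : Fin n → Bool, Kker ρ x z = 2^n := by
  simp_rw [Kker_eq]
  rw [Finset.sum_comm]
  have h : ∀ S : Finset (Fin n), ∑ x : Fin n → Bool, ρ ^ S.card * (char S x * char S z)
      = if S = ∅ then (2:ℝ)^n else 0 := by
    intro S
    rw [← Finset.mul_sum, ← Finset.sum_mul, sum_char]
    by_cases h : S = ∅ <;> simp [h, char]
  rw [Finset.sum_congr rfl fun S _ => h S]
  simp

lemma smoothing {n : ℕ} (c : Finset (Fin n) → ℝ) (ρ : ℝ) (x : Fin n → Bool) :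
    eval' (fun S => ρ ^ S.card * c S) x
      = (∑ z : Fin n → Bool, eval' c z * Kker ρ x z) / 2^n := by
  have h2n : (2:ℝ)^n ≠ 0 := by positivity
  rw [eq_div_iff h2n]
  rw [show eval' (fun S => ρ ^ S.card * c S) x
      = ∑ S : Finset (Fin n), (ρ ^ S.card * c S) * char S x from rfl, Finset.sum_mul]
  simp_rw [Kker_eq, Finset.mul_sum]
  rw [Finset.sum_comm]
  refine Finset.sum_congr rfl fun S _ => ?_
  rw [show (∑ z : Fin n → Bool, eval' c z * (ρ ^ S.card * (char S x * char S z)))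
      = ρ ^ S.card * char S x * ∑ z : Fin n → Bool, eval' c z * char S z from by
        rw [Finset.mul_sum]; exact Finset.sum_congr rfl fun z _ => by ring,
    fourier_inv]
  ring

lemma contract {n : ℕ} (c : Finset (Fin n) → ℝ) {ρ : ℝ} (hρ : |ρ| ≤ 1) :
    Ex (fun x => |eval' (fun S => ρ ^ S.card * c S) x|)
      ≤ Ex (fun x => |eval' c x|) := by
  have h2n : (0:ℝ) < 2^n := by positivity
  unfold Ex
  rw [div_le_div_iff_of_pos_right h2n]
  calc ∑ x : Fin n → Bool, |eval' (fun S => ρ ^ S.card * c S) x|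
      ≤ ∑ x : Fin n → Bool, (∑ z : Fin n → Bool, |eval' c z| * Kker ρ x z) / 2^n := by
        apply Finset.sum_le_sum
        intro x _
        rw [smoothing, abs_div, abs_of_pos h2n, div_le_div_iff_of_pos_right h2n]
        calc |∑ z : Fin n → Bool, eval' c z * Kker ρ x z|
            ≤ ∑ z : Fin n → Bool, |eval' c z * Kker ρ x z| := Finset.abs_sum_le_sum_abs _ _
          _ = ∑ z : Fin n → Bool, |eval' c z| * Kker ρ x z := by
              refine Finset.sum_congr rfl fun z _ => ?_
              rw [abs_mul, abs_of_nonneg (Kker_nonneg hρ x z)]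
    _ = ∑ z : Fin n → Bool, |eval' c z| := by
        simp_rw [Finset.sum_div]
        rw [Finset.sum_comm]
        refine Finset.sum_congr rfl fun z _ => ?_
        rw [← Finset.sum_div, ← Finset.mul_sum, sum_Kker, mul_div_assoc,
          div_self (by positivity : (2:ℝ)^n ≠ 0), mul_one]

section PartB
open Polynomial

noncomputable def node (d : ℕ) (j : Fin (d+1)) : ℝ := Real.cos (j * Real.pi / d)

noncomputable def lam (d : ℕ) (j : Fin (d+1)) : ℝ :=
  (Polynomial.derivative (Lagrange.basis Finset.univ (node d) j)).eval 1

lemma angle_mem {d : ℕ} (hd : 1 ≤ d) (j : Fin (d+1)) :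
    (j : ℝ) * Real.pi / d ∈ Set.Icc 0 Real.pi := by
  have hπ := Real.pi_pos
  have hdpos : (0:ℝ) < d := by exact_mod_cast hd
  constructor
  · positivity
  · rw [div_le_iff₀ hdpos]
    have : (j : ℝ) ≤ d := by
      have := j.isLt
      have : (j : ℕ) ≤ d := Nat.lt_succ_iff.mp j.isLt
      exact_mod_cast this
    nlinarith

lemma node_strictAnti {d : ℕ} (hd : 1 ≤ d) {i j : Fin (d+1)} (hij : i < j) :
    node d j < node d i := by
  have hπ := Real.pi_pos
  have hdpos : (0:ℝ) < d := by exact_mod_cast hd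
  apply Real.strictAntiOn_cos (angle_mem hd i) (angle_mem hd j)
  have : (i:ℝ) < j := by exact_mod_cast hij
  apply div_lt_div_of_pos_right ?_ hdpos
  nlinarith

lemma node_inj {d : ℕ} (hd : 1 ≤ d) :
    Set.InjOn (node d) ↑(Finset.univ : Finset (Fin (d+1))) := by
  intro i _ j _ h
  by_contra hne
  rcases lt_or_gt_of_ne hne with hlt | hlt
  · exact absurd h (ne_of_lt (node_strictAnti hd hlt)).symm
  · exact absurd h (ne_of_lt (node_strictAnti hd hlt))

lemma node_le_one (d : ℕ) (j : Fin (d+1)) : node d j ≤ 1 := Real.cos_le_one _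

lemma exact_sum {d : ℕ} (hd : 1 ≤ d) (q : ℝ[X]) (hq : q.degree < (d+1 : ℕ)) :
    (Polynomial.derivative q).eval 1 = ∑ j : Fin (d+1), q.eval (node d j) * lam d j := by
  have hcard : (Finset.univ : Finset (Fin (d+1))).card = d+1 := by simp
  have hq' : q.degree < (Finset.univ : Finset (Fin (d+1))).card := by rw [hcard]; exact_mod_cast hq
  have hrepr := Lagrange.eq_interpolate (node_inj hd) hq'
  conv_lhs => rw [hrepr]
  rw [Lagrange.interpolate_apply, derivative_sum, eval_finset_sum]
  refine Finset.sum_congr rfl fun j _ => ?_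
  rw [derivative_C_mul, eval_mul, eval_C]
  rfl

lemma exact_pow {d : ℕ} (hd : 1 ≤ d) {k : ℕ} (hk : k ≤ d) :
    ∑ j : Fin (d+1), (node d j) ^ k * lam d j = k := by
  have hdeg : (X ^ k : ℝ[X]).degree < (d+1 : ℕ) := by
    rw [degree_X_pow]
    exact_mod_cast Nat.lt_succ_of_le hk
  have h := exact_sum hd (X ^ k) hdeg
  simp only [derivative_X_pow, eval_mul, eval_pow, eval_X, eval_C, one_pow, mul_one,
    eval_natCast] at h
  rw [← h]

lemma neg_one_sq_pow (j : ℕ) : ((-1:ℝ)^j) * ((-1:ℝ)^j) = 1 := by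
  rw [← pow_add, ← two_mul, pow_mul]
  norm_num

lemma lam_sign {d : ℕ} (hd : 1 ≤ d) (j : Fin (d+1)) :
    |lam d j| = (-1)^(j:ℕ) * lam d j := by
  classical
  set q : ℝ[X] := Lagrange.nodal (Finset.univ.erase j) (node d) with hqdef
  have hcard : (Finset.univ.erase j).card = d := by
    rw [Finset.card_erase_of_mem (Finset.mem_univ j)]; simp
  have hqdeg : q.degree < (d+1 : ℕ) := by
    rw [hqdef, Lagrange.degree_nodal, hcard]
    exact_mod_cast Nat.lt_succ_self d
  -- derivative at 1 is nonneg
  have hD : 0 ≤ (Polynomial.derivative q).eval 1 := by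
    rw [hqdef, Lagrange.derivative_nodal, eval_finset_sum]
    apply Finset.sum_nonneg
    intro i _
    rw [Lagrange.eval_nodal]
    apply Finset.prod_nonneg
    intro i' _
    have := node_le_one d i'
    linarith
  -- the weight
  set w : ℝ := ∏ i ∈ Finset.univ.erase j, (node d j - node d i) with hwdef
  have hqj : q.eval (node d j) = w := by rw [hqdef, Lagrange.eval_nodal]
  -- sign of w
  have hw : 0 < (-1)^(j:ℕ) * w := by
    have hsplit : Finset.univ.erase j = Finset.Iio j ∪ Finset.Ioi j := by ext i; simp
    have hdisj : Disjoint (Finset.Iio j) (Finset.Ioi j) := by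
      simp only [Finset.disjoint_left, Finset.mem_Iio, Finset.mem_Ioi]
      intro i h1 h2
      exact absurd (h1.trans h2) (lt_irrefl _)
    rw [hwdef, hsplit, Finset.prod_union hdisj]
    have hA : ∏ i ∈ Finset.Iio j, (node d j - node d i)
        = (-1)^(j:ℕ) * ∏ i ∈ Finset.Iio j, (node d i - node d j) := by
      rw [Finset.prod_congr rfl (fun i _ => show node d j - node d i
          = (-1) * (node d i - node d j) from by ring), Finset.prod_mul_distrib,
        Finset.prod_const, Fin.card_Iio]
    rw [hA]
    have hApos : 0 < ∏ i ∈ Finset.Iio j, (node d i - node d j) := by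
      apply Finset.prod_pos
      intro i hi
      rw [Finset.mem_Iio] at hi
      have := node_strictAnti hd hi
      linarith
    have hBpos : 0 < ∏ i ∈ Finset.Ioi j, (node d j - node d i) := by
      apply Finset.prod_pos
      intro i hi
      rw [Finset.mem_Ioi] at hi
      have := node_strictAnti hd hi
      linarith
    calc (0:ℝ) < (∏ i ∈ Finset.Iio j, (node d i - node d j))
          * ∏ i ∈ Finset.Ioi j, (node d j - node d i) := mul_pos hApos hBpos
      _ = (-1)^(j:ℕ) * ((-1)^(j:ℕ) * (∏ i ∈ Finset.Iio j, (node d i - node d j))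
          * ∏ i ∈ Finset.Ioi j, (node d j - node d i)) := by
          rw [show ∀ a b c : ℝ, a * (a * b * c) = (a*a) * (b*c) from fun a b c => by ring,
            neg_one_sq_pow, one_mul]
      _ = (-1)^(j:ℕ) * ((-1)^(j:ℕ) * (∏ i ∈ Finset.Iio j, (node d i - node d j))
          * ∏ i ∈ Finset.Ioi j, (node d j - node d i)) := rfl
  -- identity: D = w * lam j
  have hkey : (Polynomial.derivative q).eval 1 = w * lam d j := by
    rw [exact_sum hd q hqdeg]
    rw [Finset.sum_eq_single j]
    · rw [hqj]
    · intro i _ hij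
      rw [hqdef, Lagrange.eval_nodal_at_node (Finset.mem_erase.mpr ⟨hij, Finset.mem_univ i⟩),
        zero_mul]
    · intro h; exact absurd (Finset.mem_univ j) h
  -- conclude
  have hnn : 0 ≤ (-1)^(j:ℕ) * lam d j := by
    have h2 : 0 ≤ ((-1)^(j:ℕ) * lam d j) * ((-1)^(j:ℕ) * w) := by
      rw [show (((-1:ℝ)^(j:ℕ) * lam d j) * ((-1)^(j:ℕ) * w))
          = ((-1)^(j:ℕ) * (-1)^(j:ℕ)) * (w * lam d j) from by ring, neg_one_sq_pow, one_mul,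
          ← hkey]
      exact hD
    exact le_of_not_gt fun hlt => absurd h2 (not_le.mpr (mul_neg_of_neg_of_pos hlt hw))
  calc |lam d j| = |(-1)^(j:ℕ) * lam d j| := by
        rw [abs_mul, abs_pow, abs_neg, abs_one, one_pow, one_mul]
    _ = (-1)^(j:ℕ) * lam d j := abs_of_nonneg hnn

open Polynomial.Chebyshev in
lemma U_eval_one : ∀ m : ℕ, (U ℝ (m:ℤ)).eval 1 = m + 1 := by
  intro m
  induction m using Nat.twoStepInduction with
  | zero => simp [U_zero]
  | one => norm_num [U_one]
  | more m ih2 ih1 =>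
    have hcast : ((m+2 : ℕ) : ℤ) = (m:ℤ) + 2 := by push_cast; ring
    rw [hcast, U_add_two, eval_sub, eval_mul, eval_mul, eval_X, eval_ofNat]
    rw [show ((m:ℤ) + 1) = ((m+1 : ℕ) : ℤ) from by push_cast; ring, ih1, ih2]
    push_cast
    ring

open Polynomial.Chebyshev in
lemma T_degree_le : ∀ m : ℕ, (T ℝ (m:ℤ)).natDegree ≤ m := by
  intro m
  induction m using Nat.twoStepInduction with
  | zero => simp [T_zero]
  | one => simp [T_one]
  | more m ih2 ih1 =>
    have hcast : ((m+2 : ℕ) : ℤ) = (m:ℤ) + 2 := by push_cast; ring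
    rw [hcast, T_add_two]
    rw [show ((m:ℤ) + 1) = ((m+1 : ℕ) : ℤ) from by push_cast; ring]
    apply le_trans (natDegree_sub_le _ _)
    rw [max_le_iff]
    constructor
    · apply le_trans (natDegree_mul_le)
      have : (2 * X : ℝ[X]).natDegree ≤ 1 := by
        apply le_trans (natDegree_mul_le)
        simp
      omega
    · omega

open Polynomial.Chebyshev in
lemma T_eval_node {d : ℕ} (hd : 1 ≤ d) (j : Fin (d+1)) :
    (T ℝ (d:ℤ)).eval (_root_.node d j) = (-1)^(j:ℕ) := by
  have hdne : (d:ℝ) ≠ 0 := by positivity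
  unfold _root_.node
  rw [T_real_cos]
  rw [show ((d:ℤ):ℝ) * ((j:ℝ) * Real.pi / d) = 0 + (j:ℕ) * Real.pi from by
    push_cast; field_simp; ring]
  rw [Real.cos_add_nat_mul_pi]
  simp

open Polynomial.Chebyshev in
lemma T_deriv_one {d : ℕ} (hd : 1 ≤ d) :
    (Polynomial.derivative (T ℝ (d:ℤ))).eval 1 = d^2 := by
  rw [T_derivative_eq_U]
  rw [show ((d:ℤ) - 1) = ((d - 1 : ℕ) : ℤ) from by
    have : (1:ℕ) ≤ d := hd
    push_cast [Nat.cast_sub this]; ring]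
  rw [eval_mul, U_eval_one (d-1)]
  have : ((d - 1 : ℕ) : ℝ) = (d:ℝ) - 1 := by
    have : (1:ℕ) ≤ d := hd
    push_cast [Nat.cast_sub this]; ring
  rw [this]
  simp
  ring

lemma lam_abs_sum {d : ℕ} (hd : 1 ≤ d) :
    ∑ j : Fin (d+1), |lam d j| = d^2 := by
  have hdeg : (Polynomial.Chebyshev.T ℝ (d:ℤ)).degree < (d+1 : ℕ) := by
    apply lt_of_le_of_lt (Polynomial.degree_le_natDegree)
    exact_mod_cast Nat.lt_succ_of_le (T_degree_le d)
  have h := exact_sum hd _ hdeg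
  rw [T_deriv_one hd] at h
  calc ∑ j : Fin (d+1), |lam d j| = ∑ j : Fin (d+1), (-1)^(j:ℕ) * lam d j :=
        Finset.sum_congr rfl (fun j _ => lam_sign hd j)
    _ = ∑ j : Fin (d+1), (Polynomial.Chebyshev.T ℝ (d:ℤ)).eval (node d j) * lam d j :=
        Finset.sum_congr rfl (fun j _ => by rw [T_eval_node hd j])
    _ = d^2 := h.symm

end PartB

theorem laplacian_L1_bound (n d : ℕ) (c : Finset (Fin n) → ℝ)
    (hdeg : ∀ S, c S ≠ 0 → S.card ≤ d) :
    Ex (fun x => |eval' (fun S => (S.card : ℝ) * c S) x|)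
      ≤ (d : ℝ) ^ 2 * Ex (fun x => |eval' c x|) := by
  have h2n : (0:ℝ) < 2^n := by positivity
  rcases Nat.eq_zero_or_pos d with hd0 | hd
  · subst hd0
    have hz : ∀ S : Finset (Fin n), ((S.card : ℝ)) * c S = 0 := by
      intro S
      by_cases hcS : c S = 0
      · rw [hcS, mul_zero]
      · have : S.card = 0 := Nat.le_zero.mp (hdeg S hcS)
        rw [this]; simp
    unfold Ex eval'
    simp only [hz, zero_mul, Finset.sum_const_zero, abs_zero]
    simp
  · -- d ≥ 1
    have step1 : ∀ x : Fin n → Bool, eval' (fun S => (S.card : ℝ) * c S) x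
        = ∑ j : Fin (d+1), lam d j * eval' (fun S => (node d j)^S.card * c S) x := by
      intro x
      have key : ∀ S : Finset (Fin n), ((S.card:ℝ)) * c S
          = (∑ j : Fin (d+1), (node d j)^S.card * lam d j) * c S := by
        intro S
        by_cases hcS : c S = 0
        · rw [hcS, mul_zero, mul_zero]
        · rw [exact_pow hd (hdeg S hcS)]
      calc eval' (fun S => (S.card:ℝ) * c S) x
          = ∑ S : Finset (Fin n), ((∑ j : Fin (d+1), (node d j)^S.card * lam d j) * c S)
              * char S x := by
            unfold eval'
            exact Finset.sum_congr rfl fun S _ => by rw [← key S]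
        _ = ∑ S : Finset (Fin n), ∑ j : Fin (d+1),
              lam d j * (((node d j)^S.card * c S) * char S x) := by
            refine Finset.sum_congr rfl fun S _ => ?_
            rw [Finset.sum_mul, Finset.sum_mul]
            exact Finset.sum_congr rfl fun j _ => by ring
        _ = ∑ j : Fin (d+1), ∑ S : Finset (Fin n),
              lam d j * (((node d j)^S.card * c S) * char S x) := Finset.sum_comm
        _ = ∑ j : Fin (d+1), lam d j * eval' (fun S => (node d j)^S.card * c S) x := by
            refine Finset.sum_congr rfl fun j _ => ?_
            unfold eval'
            rw [Finset.mul_sum]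
    have hExf : (0:ℝ) ≤ Ex (fun x => |eval' c x|) := by
      unfold Ex
      apply div_nonneg ?_ h2n.le
      exact Finset.sum_nonneg fun x _ => abs_nonneg _
    calc Ex (fun x => |eval' (fun S => (S.card : ℝ) * c S) x|)
        = (∑ x : Fin n → Bool, |∑ j : Fin (d+1),
            lam d j * eval' (fun S => (node d j)^S.card * c S) x|) / 2^n := by
          unfold Ex
          simp only [step1]
      _ ≤ (∑ x : Fin n → Bool, ∑ j : Fin (d+1),
            |lam d j| * |eval' (fun S => (node d j)^S.card * c S) x|) / 2^n := by
          rw [div_le_div_iff_of_pos_right h2n]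
          refine Finset.sum_le_sum fun x _ => ?_
          refine le_trans (Finset.abs_sum_le_sum_abs _ _) ?_
          exact Finset.sum_le_sum fun j _ => by rw [abs_mul]
      _ = ∑ j : Fin (d+1), |lam d j|
            * Ex (fun x => |eval' (fun S => (node d j)^S.card * c S) x|) := by
          rw [Finset.sum_comm, Finset.sum_div]
          refine Finset.sum_congr rfl fun j _ => ?_
          unfold Ex
          rw [← Finset.mul_sum, mul_div_assoc]
      _ ≤ ∑ j : Fin (d+1), |lam d j| * Ex (fun x => |eval' c x|) := by
          refine Finset.sum_le_sum fun j _ => ?_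
          refine mul_le_mul_of_nonneg_left ?_ (abs_nonneg _)
          exact contract c (Real.abs_cos_le_one _)
      _ = (d : ℝ)^2 * Ex (fun x => |eval' c x|) := by
          rw [← Finset.sum_mul, lam_abs_sum hd]
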